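/- Let G be a simple connected graph on n ≥ 2 vertices with remoteness ρ and distance eigenvalues ∂_1 ≥ ∂_2 ≥ ... ≥ ∂_n. Then ρ + ∂_n ≤ 0, with equality if and only if G is the complete graph K_n. -/

import Mathlib

set_option linter.unusedSectionVars false

open Finset

namespace DistPaper

variable {V : Type*} [Fintype V] [DecidableEq V]

/-- The distance matrix of a graph: the `(u,v)` entry is the graph distance. -/
noncomputable def distMatrix (G : SimpleGraph V) : Matrix V V ℝ :=
  fun u v => (G.dist u v : ℝ)

lemma isHermitian_distMatrix (G : SimpleGraph V) : (distMatrix G).IsHermitian := by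
  ext u v
  simp [distMatrix, Matrix.conjTranspose_apply, SimpleGraph.dist_comm]

/-- The `k`-th largest eigenvalue (1-indexed, so `k = 1` is the largest) of the
distance matrix of `G`; junk value `0` if `k - 1 ≥ |V|`. -/
noncomputable def distEig (G : SimpleGraph V) (k : ℕ) : ℝ :=
  if h : k - 1 < Fintype.card V then
    ((isHermitian_distMatrix G).eigenvalues ∘ (Fintype.equivFin V).symm)
      (Tuple.sort ((isHermitian_distMatrix G).eigenvalues ∘ (Fintype.equivFin V).symm)
        (Fin.rev ⟨k - 1, h⟩))
  else 0

/-- The transmission of a vertex: the sum of the distances to all other vertices. -/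
noncomputable def transmission (G : SimpleGraph V) (v : V) : ℕ :=
  ∑ u, G.dist v u

/-- The remoteness of a graph: the maximum over all vertices of the average
distance from that vertex to the others, `ρ = max_v Tr(v)/(n-1)`. -/
noncomputable def remoteness (G : SimpleGraph V) : ℝ :=
  ((univ.sup (transmission G) : ℕ) : ℝ) / ((Fintype.card V : ℝ) - 1)

/-- `G` is a complete multipartite graph: vertices can be classified so that two
vertices are adjacent iff they lie in different classes. -/
def IsCompleteMultipartite (G : SimpleGraph V) : Prop :=
  ∃ f : V → V, ∀ u v, G.Adj u v ↔ f u ≠ f v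

/-- The `k`-th largest eigenvalue (1-indexed) of the Laplacian matrix of `G`;
junk value `0` if `k - 1 ≥ |V|`. -/
noncomputable def lapEig (G : SimpleGraph V) (k : ℕ) : ℝ := by
  classical
  exact if h : k - 1 < Fintype.card V then
    (((SimpleGraph.posSemidef_lapMatrix ℝ G).1).eigenvalues ∘ (Fintype.equivFin V).symm)
      (Tuple.sort ((((SimpleGraph.posSemidef_lapMatrix ℝ G)).1).eigenvalues ∘ (Fintype.equivFin V).symm)
        (Fin.rev ⟨k - 1, h⟩))
  else 0

/-- The Wiener index: the sum of distances over unordered pairs of vertices. -/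
noncomputable def wienerIndex (G : SimpleGraph V) : ℝ :=
  (∑ u, ∑ v, (G.dist u v : ℝ)) / 2


section Helpers
open Matrix
open scoped RealInnerProductSpace

lemma smul_one_eq_diag {W : Type*} [Fintype W] [DecidableEq W] (c : ℝ) :
    (c • (1 : Matrix W W ℝ)) = Matrix.diagonal (fun _ => c) := by
  ext i j
  by_cases h : i = j <;> simp [Matrix.one_apply, h]

lemma posSemidef_sub_smul_one {W : Type*} [Fintype W] [DecidableEq W]
    {A : Matrix W W ℝ} (hA : A.IsHermitian) {c : ℝ}
    (h : ∀ i, c ≤ hA.eigenvalues i) : (A - c • 1).PosSemidef := by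
  have hU : (hA.eigenvectorUnitary : Matrix W W ℝ) * star (hA.eigenvectorUnitary : Matrix W W ℝ)
      = 1 := Matrix.mem_unitaryGroup_iff.mp hA.eigenvectorUnitary.2
  have h1 : Matrix.diagonal (fun i => hA.eigenvalues i - c)
      = Matrix.diagonal (RCLike.ofReal ∘ hA.eigenvalues) - c • 1 := by
    rw [smul_one_eq_diag, ← Matrix.diagonal_sub]
    congr 1
  have h2 : (hA.eigenvectorUnitary : Matrix W W ℝ) * (c • (1 : Matrix W W ℝ)) *
      star (hA.eigenvectorUnitary : Matrix W W ℝ) = c • 1 := by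
    rw [Matrix.mul_smul, Matrix.mul_one, Matrix.smul_mul, hU]
  have key : A - c • 1 = (hA.eigenvectorUnitary : Matrix W W ℝ) *
      Matrix.diagonal (fun i => hA.eigenvalues i - c) *
      (hA.eigenvectorUnitary : Matrix W W ℝ)ᴴ := by
    rw [h1, Matrix.mul_sub, Matrix.sub_mul, ← Matrix.star_eq_conjTranspose, h2]
    conv_lhs => rw [hA.spectral_theorem, Unitary.conjStarAlgAut_apply]
  rw [key]
  exact (Matrix.PosSemidef.diagonal (fun i => sub_nonneg.mpr (h i))).mul_mul_conjTranspose_same _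

lemma rayleigh_le {W : Type*} [Fintype W] [DecidableEq W]
    {A : Matrix W W ℝ} {c : ℝ} (h : (A - c • 1).PosSemidef) (y : W → ℝ) :
    c * (y ⬝ᵥ y) ≤ y ⬝ᵥ (A *ᵥ y) := by
  have h2 := h.dotProduct_mulVec_nonneg y
  rw [star_trivial, Matrix.sub_mulVec, dotProduct_sub, Matrix.smul_mulVec,
    Matrix.one_mulVec, dotProduct_smul, smul_eq_mul] at h2
  linarith

lemma le_eigenvalues_of_psd {W : Type*} [Fintype W] [DecidableEq W]
    {A : Matrix W W ℝ} (hA : A.IsHermitian) {c : ℝ}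
    (h : (A - c • 1).PosSemidef) (i : W) : c ≤ hA.eigenvalues i := by
  set x : W → ℝ := ⇑(hA.eigenvectorBasis i) with hx
  have hxx : x ⬝ᵥ x = 1 := by
    have h1 : @inner ℝ _ _ (hA.eigenvectorBasis i) (hA.eigenvectorBasis i) = 1 := by
      rw [real_inner_self_eq_norm_mul_norm, hA.eigenvectorBasis.orthonormal.1 i, mul_one]
    rw [PiLp.inner_apply] at h1
    simpa [dotProduct, hx, sq] using h1
  have h2 := h.dotProduct_mulVec_nonneg x
  rw [star_trivial, Matrix.sub_mulVec, dotProduct_sub, Matrix.smul_mulVec,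
    Matrix.one_mulVec, dotProduct_smul, smul_eq_mul, hA.mulVec_eigenvectorBasis,
    dotProduct_smul, smul_eq_mul, hxx] at h2
  linarith

end Helpers

section MinEig
open Matrix

lemma distEig_min (n : ℕ) (hn : 1 ≤ n) (G : SimpleGraph (Fin n)) :
    (∃ w, distEig G n = (isHermitian_distMatrix G).eigenvalues w) ∧
    ∀ u, distEig G n ≤ (isHermitian_distMatrix G).eigenvalues u := by
  have h : n - 1 < Fintype.card (Fin n) := by simp; omega
  set g := (isHermitian_distMatrix G).eigenvalues ∘ (Fintype.equivFin (Fin n)).symm with hg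
  have hval : distEig G n = g (Tuple.sort g (Fin.rev ⟨n - 1, h⟩)) := by
    rw [distEig, dif_pos h]
  have hrev : (Fin.rev ⟨n - 1, h⟩ : Fin (Fintype.card (Fin n))) = ⟨0, by omega⟩ := by
    ext
    simp [Fin.rev]
    omega
  rw [hval, hrev]
  constructor
  · exact ⟨(Fintype.equivFin (Fin n)).symm (Tuple.sort g ⟨0, by omega⟩), rfl⟩
  · intro u
    have hmono := Tuple.monotone_sort g
    have h0 : (⟨0, by omega⟩ : Fin (Fintype.card (Fin n))) ≤
        (Tuple.sort g)⁻¹ (Fintype.equivFin (Fin n) u) := by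
      simp [Fin.le_def]
    have h1 := hmono h0
    simp only [Function.comp_apply] at h1
    rw [← Equiv.Perm.mul_apply, mul_inv_cancel, Equiv.Perm.one_apply] at h1
    simpa [hg] using h1

end MinEig

section TopCase
open Matrix

lemma remoteness_top (n : ℕ) (hn : 2 ≤ n) : remoteness (⊤ : SimpleGraph (Fin n)) = 1 := by
  have hn1 : 1 ≤ n := by omega
  have hnr1 : (0:ℝ) < (n:ℝ) - 1 := by
    have : (2:ℝ) ≤ (n:ℝ) := by exact_mod_cast hn
    linarith
  have hne : (univ : Finset (Fin n)).Nonempty := ⟨⟨0, by omega⟩, mem_univ _⟩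
  have hd : ∀ u w : Fin n, (⊤ : SimpleGraph (Fin n)).dist u w = if u = w then 0 else 1 := by
    intro u w
    by_cases h : u = w
    · simp [h]
    · rw [if_neg h]
      exact SimpleGraph.dist_eq_one_iff_adj.mpr (by simp [h])
  have htrans : ∀ u, transmission (⊤ : SimpleGraph (Fin n)) u = n - 1 := by
    intro u
    unfold transmission
    rw [← Finset.sum_erase (univ : Finset (Fin n))
      (show (⊤ : SimpleGraph (Fin n)).dist u u = 0 by simp)]
    rw [Finset.sum_congr rfl (fun w hw => by
      rw [hd, if_neg (Ne.symm (Finset.ne_of_mem_erase hw))])]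
    simp [Finset.card_erase_of_mem]
  have hsup : univ.sup (transmission (⊤ : SimpleGraph (Fin n))) = n - 1 := by
    rw [funext htrans]
    exact Finset.sup_const hne _
  unfold remoteness
  rw [Fintype.card_fin, hsup, Nat.cast_sub hn1, Nat.cast_one]
  exact div_self (ne_of_gt hnr1)

lemma distEig_top (n : ℕ) (hn : 2 ≤ n) : distEig (⊤ : SimpleGraph (Fin n)) n = -1 := by
  have hn1 : 1 ≤ n := by omega
  obtain ⟨⟨w₀, hw₀⟩, hμle⟩ := distEig_min n hn1 (⊤ : SimpleGraph (Fin n))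
  set μ := distEig (⊤ : SimpleGraph (Fin n)) n with hμ
  have hd : ∀ u w : Fin n, (⊤ : SimpleGraph (Fin n)).dist u w = if u = w then 0 else 1 := by
    intro u w
    by_cases h : u = w
    · simp [h]
    · rw [if_neg h]
      exact SimpleGraph.dist_eq_one_iff_adj.mpr (by simp [h])
  have hPSD : (distMatrix (⊤ : SimpleGraph (Fin n)) - μ • 1).PosSemidef :=
    posSemidef_sub_smul_one (isHermitian_distMatrix _) hμle
  -- upper bound via test vector
  set a : Fin n := ⟨0, by omega⟩ with ha
  set b : Fin n := ⟨1, by omega⟩ with hb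
  have hab : a ≠ b := by simp [ha, hb, Fin.ext_iff]
  set y : Fin n → ℝ := fun u => (if u = a then 1 else 0) - (if u = b then 1 else 0) with hy
  have hyy : y ⬝ᵥ y = 2 := by
    have h1 : ∀ u : Fin n, y u * y u =
        (if u = a then 1 else 0) + (if u = b then 1 else 0) := by
      intro u
      by_cases h2 : u = a
      · subst h2; simp [hy, hab]
      · by_cases h3 : u = b
        · subst h3; simp [hy, h2]
        · simp [hy, h2, h3]
    rw [dotProduct, Finset.sum_congr rfl (fun u _ => h1 u), Finset.sum_add_distrib,
      Finset.sum_ite_eq' univ a, Finset.sum_ite_eq' univ b]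
    simp
    norm_num
  have hDy : ∀ u, (distMatrix (⊤ : SimpleGraph (Fin n)) *ᵥ y) u =
      ((⊤ : SimpleGraph (Fin n)).dist u a : ℝ) - ((⊤ : SimpleGraph (Fin n)).dist u b : ℝ) := by
    intro u
    simp only [Matrix.mulVec, dotProduct, distMatrix, hy, mul_sub, mul_ite, mul_one, mul_zero,
      Finset.sum_sub_distrib, Finset.sum_ite_eq' univ, mem_univ, if_true]
  have hyDy : y ⬝ᵥ (distMatrix (⊤ : SimpleGraph (Fin n)) *ᵥ y) = -2 := by
    have h1 : ∀ u : Fin n, y u * ((distMatrix (⊤ : SimpleGraph (Fin n)) *ᵥ y) u) =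
        (if u = a then ((⊤ : SimpleGraph (Fin n)).dist u a : ℝ)
          - ((⊤ : SimpleGraph (Fin n)).dist u b : ℝ) else 0)
        - (if u = b then ((⊤ : SimpleGraph (Fin n)).dist u a : ℝ)
          - ((⊤ : SimpleGraph (Fin n)).dist u b : ℝ) else 0) := by
      intro u
      rw [hDy u]
      by_cases h2 : u = a
      · subst h2
        simp [hy, hab]
      · by_cases h3 : u = b
        · subst h3
          simp [hy, h2]
        · simp [hy, h2, h3]
    rw [dotProduct, Finset.sum_congr rfl (fun u _ => h1 u), Finset.sum_sub_distrib,
      Finset.sum_ite_eq' univ a, Finset.sum_ite_eq' univ b]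
    simp [hd, hab, Ne.symm hab]
    norm_num
  have hup : μ ≤ -1 := by
    have h2 := rayleigh_le hPSD y
    rw [hyy, hyDy] at h2
    linarith
  -- lower bound via all-ones matrix
  have hJ : (distMatrix (⊤ : SimpleGraph (Fin n)) - (-1 : ℝ) • 1).PosSemidef := by
    have hEq : distMatrix (⊤ : SimpleGraph (Fin n)) - (-1 : ℝ) • 1
        = Matrix.of (fun _ _ => (1 : ℝ)) := by
      ext u w
      by_cases h : u = w <;>
        simp [distMatrix, hd, h, Matrix.one_apply, Matrix.sub_apply, Matrix.smul_apply]
    rw [hEq]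
    refine .of_dotProduct_mulVec_nonneg (by ext u w; simp [Matrix.conjTranspose_apply]) fun z => ?_
    have h3 : star z ⬝ᵥ (Matrix.of (fun _ _ => (1 : ℝ)) *ᵥ z) = (∑ u, z u) * (∑ u, z u) := by
      rw [star_trivial]
      simp [Matrix.mulVec, dotProduct, Finset.sum_mul]
    rw [h3]
    exact mul_self_nonneg _
  have hdown : (-1 : ℝ) ≤ μ := by
    rw [hw₀]
    exact le_eigenvalues_of_psd (isHermitian_distMatrix _) hJ w₀
  linarith

end TopCase

open Matrix

/-- For a simple connected graph on `n ≥ 2` vertices with remoteness `ρ`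
and smallest distance eigenvalue `∂_n`, `ρ + ∂_n ≤ 0`, with equality iff `G = K_n`. -/
theorem remoteness_add_smallest_distEig_nonpos (n : ℕ) (hn : 2 ≤ n) (G : SimpleGraph (Fin n))
    (hconn : G.Connected) :
    remoteness G + distEig G n ≤ 0 ∧ (remoteness G + distEig G n = 0 ↔ G = ⊤) := by
  have hn1 : 1 ≤ n := by omega
  have hnr : (2:ℝ) ≤ (n:ℝ) := by exact_mod_cast hn
  set nr : ℝ := (n : ℝ) with hnrdef
  have hnr1 : (0:ℝ) < nr - 1 := by linarith
  have hnr0 : (0:ℝ) < nr := by linarith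
  have hcard : Fintype.card (Fin n) = n := Fintype.card_fin n
  set t : ℕ := univ.sup (transmission G) with ht
  have hrem : remoteness G = (t:ℝ) / (nr - 1) := by
    unfold remoteness
    rw [hcard, ← ht]
  have hne : (univ : Finset (Fin n)).Nonempty := ⟨⟨0, by omega⟩, mem_univ _⟩
  obtain ⟨v, -, hv⟩ := Finset.exists_mem_eq_sup univ hne (transmission G)
  set Tr : Fin n → ℝ := fun u => ∑ w, (G.dist u w : ℝ) with hTrdef
  have hTrcast : ∀ u, (transmission G u : ℝ) = Tr u := by
    intro u
    unfold transmission
    push_cast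
    rfl
  have hTrle : ∀ u, Tr u ≤ (t : ℝ) := by
    intro u
    rw [← hTrcast]
    exact_mod_cast Finset.le_sup (f := transmission G) (mem_univ u)
  have hTrv : Tr v = (t:ℝ) := by
    rw [← hTrcast]
    exact_mod_cast hv.symm
  set x : Fin n → ℝ := fun u => (if u = v then nr else 0) - 1 with hx
  have hDx : ∀ u, (distMatrix G *ᵥ x) u = nr * (G.dist u v : ℝ) - Tr u := by
    intro u
    simp only [Matrix.mulVec, dotProduct, distMatrix, hx, mul_sub, mul_one, mul_ite, mul_zero,
      Finset.sum_sub_distrib, Finset.sum_ite_eq' univ v, mem_univ, if_true, hTrdef]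
    ring
  have hxx : x ⬝ᵥ x = nr^2 - nr := by
    have h1 : ∀ u : Fin n, x u * x u = (if u = v then nr^2 - 2*nr else 0) + 1 := by
      intro u
      by_cases h : u = v <;> simp [hx, h] <;> ring
    rw [dotProduct, Finset.sum_congr rfl (fun u _ => h1 u), Finset.sum_add_distrib,
      Finset.sum_ite_eq' univ v, Finset.sum_const, Finset.card_univ, hcard]
    simp
    ring
  have hsumdv : ∑ u, (G.dist u v : ℝ) = Tr v := by
    rw [hTrdef]
    exact Finset.sum_congr rfl (fun u _ => by rw [SimpleGraph.dist_comm])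
  have hxDx : x ⬝ᵥ (distMatrix G *ᵥ x) = -2*nr*(t:ℝ) + ∑ u, Tr u := by
    have hstep : ∀ u : Fin n, x u * (nr * (G.dist u v : ℝ) - Tr u)
        = (if u = v then nr * (nr * (G.dist u v : ℝ) - Tr u) else 0)
          - (nr * (G.dist u v : ℝ) - Tr u) := by
      intro u
      by_cases h : u = v
      · simp [hx, h]
        ring
      · simp [hx, h]
    calc x ⬝ᵥ (distMatrix G *ᵥ x) = ∑ u, x u * (nr * (G.dist u v : ℝ) - Tr u) := by
          rw [dotProduct]
          exact Finset.sum_congr rfl fun u _ => by rw [hDx u]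
      _ = ∑ u, ((if u = v then nr * (nr * (G.dist u v : ℝ) - Tr u) else 0)
            - (nr * (G.dist u v : ℝ) - Tr u)) := Finset.sum_congr rfl fun u _ => hstep u
      _ = (nr * (nr * ((G.dist v v : ℕ):ℝ) - Tr v))
            - (nr * (∑ u, (G.dist u v : ℝ)) - ∑ u, Tr u) := by
          rw [Finset.sum_sub_distrib, Finset.sum_ite_eq' univ v, Finset.sum_sub_distrib,
            ← Finset.mul_sum]
          simp
      _ = -2*nr*(t:ℝ) + ∑ u, Tr u := by
          rw [hsumdv, hTrv, SimpleGraph.dist_self]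
          push_cast
          ring
  have hT : ∑ u, Tr u ≤ nr * (t:ℝ) := by
    calc ∑ u, Tr u ≤ ∑ _u : Fin n, (t:ℝ) := Finset.sum_le_sum (fun u _ => hTrle u)
      _ = nr * (t:ℝ) := by
          rw [Finset.sum_const, Finset.card_univ, hcard, nsmul_eq_mul]
  obtain ⟨⟨w₀, hw₀⟩, hμle⟩ := distEig_min n hn1 G
  set μ := distEig G n with hμdef
  have hPSD : (distMatrix G - μ • 1).PosSemidef :=
    posSemidef_sub_smul_one (isHermitian_distMatrix G) hμle
  have hray := rayleigh_le hPSD x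
  rw [hxx, hxDx] at hray
  have hchain : μ * (nr^2 - nr) ≤ -nr * (t:ℝ) := by linarith
  have hmain : μ * (nr - 1) ≤ -(t:ℝ) := by
    have h2 : μ * (nr - 1) * nr ≤ -(t:ℝ) * nr := by
      calc μ * (nr - 1) * nr = μ * (nr^2 - nr) := by ring
        _ ≤ -nr * (t:ℝ) := hchain
        _ = -(t:ℝ) * nr := by ring
    exact le_of_mul_le_mul_right h2 hnr0
  have goal1 : remoteness G + μ ≤ 0 := by
    rw [hrem]
    have h2 : (t:ℝ)/(nr-1) ≤ -μ := by
      rw [div_le_iff₀ hnr1]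
      linarith
    linarith
  refine ⟨goal1, ⟨fun heq => ?_, fun hG => ?_⟩⟩
  · -- equality → complete
    have hμval : μ * (nr - 1) = -(t:ℝ) := by
      rw [hrem] at heq
      have h2 : (t:ℝ)/(nr-1) = -μ := by linarith
      rw [div_eq_iff (ne_of_gt hnr1)] at h2
      linarith
    have hchain_eq : μ * (nr^2 - nr) = -nr * (t:ℝ) := by linear_combination nr * hμval
    have hSum : ∑ u, Tr u = nr * (t:ℝ) := by linarith
    have hzero : x ⬝ᵥ ((distMatrix G - μ • 1) *ᵥ x) = 0 := by
      rw [Matrix.sub_mulVec, dotProduct_sub, Matrix.smul_mulVec, Matrix.one_mulVec,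
        dotProduct_smul, smul_eq_mul, hxx, hxDx, hSum]
      linarith
    have hker : (distMatrix G - μ • 1) *ᵥ x = 0 :=
      (hPSD.dotProduct_mulVec_zero_iff x).mp (by rw [star_trivial]; exact hzero)
    have hxeig : ∀ u, (distMatrix G *ᵥ x) u = μ * x u := by
      intro u
      have h0 := congrFun hker u
      simp only [Matrix.sub_mulVec, Matrix.smul_mulVec, Matrix.one_mulVec, Pi.sub_apply,
        Pi.smul_apply, smul_eq_mul, Pi.zero_apply] at h0
      linarith
    have hTrall : ∀ u, Tr u = (t:ℝ) := by
      intro u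
      by_contra hne2
      have hlt' : Tr u < (t:ℝ) := lt_of_le_of_ne (hTrle u) hne2
      have h3 := Finset.sum_lt_sum (fun i (_ : i ∈ univ) => hTrle i) ⟨u, mem_univ u, hlt'⟩
      rw [Finset.sum_const, Finset.card_univ, hcard, nsmul_eq_mul, hSum] at h3
      exact lt_irrefl _ h3
    have hdv : ∀ u, u ≠ v → ((G.dist u v : ℕ):ℝ) = (t:ℝ)/(nr - 1) := by
      intro u hu
      have h1 := hxeig u
      rw [hDx u] at h1
      have h2 : x u = -1 := by simp [hx, hu]
      rw [h2, hTrall u] at h1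
      have h4 : nr * (((G.dist u v : ℕ):ℝ)*(nr-1)) = nr * (t:ℝ) := by
        linear_combination (nr - 1) * h1 - hμval
      have h5 : ((G.dist u v : ℕ):ℝ)*(nr-1) = (t:ℝ) := mul_left_cancel₀ (ne_of_gt hnr0) h4
      rw [eq_div_iff (ne_of_gt hnr1)]
      exact h5
    obtain ⟨u₀, hu₀⟩ : ∃ u, G.Adj v u := by
      have hvne : ∃ u : Fin n, u ≠ v := by
        by_cases h0 : v = ⟨0, by omega⟩
        · refine ⟨⟨1, by omega⟩, ?_⟩
          rw [h0]
          simp [Fin.ext_iff]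
        · exact ⟨⟨0, by omega⟩, fun hh => h0 hh.symm⟩
      obtain ⟨u, hu⟩ := hvne
      obtain ⟨p⟩ := hconn v u
      exact ⟨p.getVert 1, p.adj_snd (SimpleGraph.Walk.not_nil_of_ne (Ne.symm hu))⟩
    have hdu0 : G.dist u₀ v = 1 := by
      rw [SimpleGraph.dist_comm]
      exact SimpleGraph.dist_eq_one_iff_adj.mpr hu₀
    have htval : (t:ℝ) = nr - 1 := by
      have h6 := hdv u₀ hu₀.ne'
      rw [hdu0] at h6
      rw [eq_comm, div_eq_iff (ne_of_gt hnr1)] at h6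
      push_cast at h6
      linarith
    have hTrn : ∀ u, transmission G u = n - 1 := by
      intro u
      have h1 : (transmission G u : ℝ) = ((n - 1 : ℕ) : ℝ) := by
        rw [hTrcast, hTrall u, htval, Nat.cast_sub hn1]
        simp [hnrdef]
      exact_mod_cast h1
    ext u w
    simp only [SimpleGraph.top_adj]
    constructor
    · exact fun h => h.ne
    · intro huw
      rw [← SimpleGraph.dist_eq_one_iff_adj]
      have hsum : ∑ w', G.dist u w' = n - 1 := hTrn u
      have hsum' : ∑ w' ∈ univ.erase u, G.dist u w' = n - 1 := by
        rw [Finset.sum_erase _ (by simp : G.dist u u = 0)]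
        exact hsum
      have hone : ∀ w' ∈ univ.erase u, 1 ≤ G.dist u w' := by
        intro w' hw'
        exact hconn.pos_dist_of_ne (Ne.symm (Finset.ne_of_mem_erase hw'))
      have hwmem : w ∈ univ.erase u := Finset.mem_erase.mpr ⟨Ne.symm huw, mem_univ w⟩
      refine le_antisymm ?_ (hone w hwmem)
      by_contra hgt
      push_neg at hgt
      have hlt := Finset.sum_lt_sum hone ⟨w, hwmem, hgt⟩
      rw [Finset.sum_const, hsum', Finset.card_erase_of_mem (mem_univ u), Finset.card_univ,
        hcard, smul_eq_mul, mul_one] at hlt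
      exact lt_irrefl _ hlt
  · -- complete → equality
    subst hG
    rw [hrem] at goal1 ⊢
    have h1 := distEig_top n hn
    rw [← hμdef] at h1
    rw [h1]
    have h2 : (t:ℕ) = n - 1 := by
      rw [ht]
      have hd : ∀ u w : Fin n, (⊤ : SimpleGraph (Fin n)).dist u w = if u = w then 0 else 1 := by
        intro u w
        by_cases h : u = w
        · simp [h]
        · rw [if_neg h]
          exact SimpleGraph.dist_eq_one_iff_adj.mpr (by simp [h])
      have htrans : ∀ u, transmission (⊤ : SimpleGraph (Fin n)) u = n - 1 := by
        intro u
        unfold transmission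
        rw [← Finset.sum_erase (univ : Finset (Fin n))
          (show (⊤ : SimpleGraph (Fin n)).dist u u = 0 by simp)]
        rw [Finset.sum_congr rfl (fun w hw => by
          rw [hd, if_neg (Ne.symm (Finset.ne_of_mem_erase hw))])]
        simp [Finset.card_erase_of_mem]
      rw [funext htrans]
      exact Finset.sup_const hne _
    rw [h2, Nat.cast_sub hn1, Nat.cast_one, ← hnrdef, div_self (ne_of_gt hnr1)]
    ring

end DistPaper
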